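/- The map x : ℂ \ {0} → ℝ⁴, x(z) = 2 Re( z + (t²+1)/z, −i(z + (t²−1)/z), 2 Log z, 2t/z ) with parameter t ∈ (−1,1), t treated as fixed and Log any fixed continuous branch — precisely: the real-analytic map whose components are x₁ = 2Re(z + (t²+1)/z), x₂ = 2Re(−i(z+(t²−1)/z)), x₃ = 4 ln|z|, x₄ = 2Re(2t/z) — is injective on ℂ \ {0}. -/

import Mathlib

open Complex

/-- The generalized catenoid `x : ℂ \ {0} → ℝ⁴` with parameter `t`, with components
`x₁ = 2 Re(z + (t²+1)/z)`, `x₂ = 2 Re(-i(z + (t²-1)/z))`, `x₃ = 4 ln|z|`,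
`x₄ = 2 Re(2t/z)`. -/
noncomputable def genCatenoid (t : ℝ) (z : ℂ) : ℝ × ℝ × ℝ × ℝ :=
  ((2 * (z + ((t : ℂ) ^ 2 + 1) / z).re),
   (2 * (-I * (z + ((t : ℂ) ^ 2 - 1) / z)).re),
   4 * Real.log ‖z‖,
   (2 * (2 * (t : ℂ) / z).re))

/-- For `t ∈ (-1, 1)`, the generalized catenoid is injective on `ℂ \ {0}`. -/
theorem stmt14 (t : ℝ) (ht : -1 < t) (ht' : t < 1) :
    ∀ z w : ℂ, z ≠ 0 → w ≠ 0 → genCatenoid t z = genCatenoid t w → z = w := by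
  intro z w hz hw h
  simp only [genCatenoid, Prod.mk.injEq] at h
  obtain ⟨h1, h2, h3, -⟩ := h
  have habs : ‖z‖ = ‖w‖ :=
    Real.log_injOn_pos (Set.mem_Ioi.mpr (norm_pos_iff.mpr hz))
      (Set.mem_Ioi.mpr (norm_pos_iff.mpr hw)) (by linarith)
  have hn : Complex.normSq z = Complex.normSq w := by
    rw [← Complex.sq_norm, ← Complex.sq_norm, habs]
  have haz : 0 < Complex.normSq z := Complex.normSq_pos.mpr hz
  have e1 : ∀ u : ℂ, (u + ((t:ℂ)^2+1)/u).re = u.re + (t^2+1) * u.re / Complex.normSq u := by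
    intro u
    simp [Complex.add_re, Complex.div_re, Complex.normSq_apply, ← Complex.ofReal_pow]
    try ring
  have e2 : ∀ u : ℂ, (-I * (u + ((t:ℂ)^2-1)/u)).re
      = u.im + (t^2-1) * (-u.im) / Complex.normSq u := by
    intro u
    simp [Complex.add_im, Complex.div_im, Complex.normSq_apply, ← Complex.ofReal_pow]
    try ring
  rw [e1, e1, ← hn] at h1
  rw [e2, e2, ← hn] at h2
  have hcp : (0:ℝ) < Complex.normSq z + (t^2+1) := by positivity
  have key1 : z.re * (Complex.normSq z + (t^2+1)) = w.re * (Complex.normSq z + (t^2+1)) := by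
    field_simp at h1
    nlinarith [h1]
  have hre : z.re = w.re := mul_right_cancel₀ (ne_of_gt hcp) key1
  have ht2 : 0 < 1 - t^2 := by nlinarith
  have hcp2 : (0:ℝ) < Complex.normSq z + (1 - t^2) := by positivity
  have key2 : z.im * (Complex.normSq z + (1-t^2)) = w.im * (Complex.normSq z + (1-t^2)) := by
    field_simp at h2
    nlinarith [h2]
  have him : z.im = w.im := mul_right_cancel₀ (ne_of_gt hcp2) key2
  exact Complex.ext hre him
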